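/- arXiv:1504.02608 — 7 statements merged into one kernel-verified Lean document; each statement's English description precedes it below -/
import Mathlib

section
/- For any type P ∈ P_n(X) and any distribution Q on X, the probability under Q^n of the type class T_P satisfies |P_n(X)|^{-1} · exp(-n·D(P‖Q)) ≤ Q^n(T_P) ≤ exp(-n·D(P‖Q)). -/
open Finset Nat

open Finset Nat

private theorem aux_fact_upper : ∀ (m d : ℕ), (d + m)! ≤ d ! * (d + m) ^ m := by
  intro m
  induction m with
  | zero => simp
  | succ k ih =>
    intro d
    have h1 : (d + (k+1))! = (d + k + 1) * (d + k)! := by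
      rw [show d + (k+1) = (d + k) + 1 from rfl, Nat.factorial_succ]
    rw [h1]
    calc (d + k + 1) * (d + k)! ≤ (d + k + 1) * (d ! * (d + k) ^ k) :=
          Nat.mul_le_mul_left _ (ih d)
      _ ≤ (d + k + 1) * (d ! * (d + k + 1) ^ k) := by
          exact Nat.mul_le_mul_left _ (Nat.mul_le_mul_left _ (Nat.pow_le_pow_left (by omega) k))
      _ = d ! * (d + (k+1)) ^ (k+1) := by ring

private theorem aux_nat (c d : ℕ) : c ! * c ^ d ≤ d ! * c ^ c := by
  rcases le_or_gt c d with h | h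
  · obtain ⟨m, rfl⟩ : ∃ m, d = c + m := ⟨d - c, by omega⟩
    have h2 : c ! * (c+1) ^ m ≤ (c + m)! := Nat.factorial_mul_pow_le_factorial
    calc c ! * c ^ (c + m) = (c ! * c ^ m) * c ^ c := by ring
      _ ≤ (c ! * (c+1) ^ m) * c ^ c :=
          Nat.mul_le_mul_right _ (Nat.mul_le_mul_left _ (Nat.pow_le_pow_left (by omega) m))
      _ ≤ (c + m)! * c ^ c := Nat.mul_le_mul_right _ h2
  · obtain ⟨m, rfl⟩ : ∃ m, c = d + m := ⟨c - d, by omega⟩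
    have h2 : (d + m)! ≤ d ! * (d + m) ^ m := aux_fact_upper m d
    calc (d + m)! * (d + m) ^ d ≤ (d ! * (d + m) ^ m) * (d + m) ^ d :=
          Nat.mul_le_mul_right _ h2
      _ = d ! * (d + m) ^ (d + m) := by ring

private theorem aux_exists {X : Type} [Fintype X] [DecidableEq X] {n : ℕ} (c : X → ℕ)
    (hc : ∑ a, c a = n) :
    ∃ x : Fin n → X, ∀ a, (univ.filter fun i => x i = a).card = c a := by
  have e : Fin n ≃ (Σ a : X, Fin (c a)) := by
    apply Fintype.equivOfCardEq
    simp [Fintype.card_sigma, hc]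
  refine ⟨fun i => (e i).1, fun a => ?_⟩
  rw [← Fintype.card_subtype]
  have h1 : {i // (e i).1 = a} ≃ {p : Σ a : X, Fin (c a) // p.1 = a} :=
    e.subtypeEquiv fun i => Iff.rfl
  have h2 : {p : Σ a' : X, Fin (c a') // p.1 = a} ≃ Σ x : {x : X // x = a}, Fin (c x.1) :=
    Equiv.subtypeSigmaEquiv (fun a' => Fin (c a')) (fun x => x = a)
  rw [Fintype.card_congr (h1.trans h2), Fintype.card_sigma]
  rw [Fintype.sum_eq_single (⟨a, rfl⟩ : {x : X // x = a}) (fun x => by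
    rcases x with ⟨x, rfl⟩; intro h; simp at h)]
  simp

private theorem aux_glue {X : Type} [DecidableEq X] {n : ℕ} (x y : Fin n → X)
    (h : ∀ a, (univ.filter fun i => x i = a).card = (univ.filter fun i => y i = a).card) :
    ∃ σ : Equiv.Perm (Fin n), y ∘ σ = x := by
  have e : ∀ a : X, {i // x i = a} ≃ {i // y i = a} := fun a =>
    Fintype.equivOfCardEq (by
      rw [Fintype.card_subtype, Fintype.card_subtype]; exact h a)
  let F : Fin n → Fin n := fun i => (e (x i) ⟨i, rfl⟩).1
  let G : Fin n → Fin n := fun j => ((e (y j)).symm ⟨j, rfl⟩).1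
  have eqF : ∀ {i : Fin n} {a : X} (h : x i = a), F i = (e a ⟨i, h⟩).1 := by
    intro i a h; subst h; rfl
  have eqG : ∀ {j : Fin n} {a : X} (h : y j = a), G j = ((e a).symm ⟨j, h⟩).1 := by
    intro j a h; subst h; rfl
  have hyF : ∀ i, y (F i) = x i := fun i => (e (x i) ⟨i, rfl⟩).2
  have hxG : ∀ j, x (G j) = y j := fun j => ((e (y j)).symm ⟨j, rfl⟩).2
  have hGF : ∀ i, G (F i) = i := by
    intro i
    rw [eqG (hyF i)]
    have : (⟨F i, hyF i⟩ : {j // y j = x i}) = e (x i) ⟨i, rfl⟩ := Subtype.ext rfl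
    rw [this, Equiv.symm_apply_apply]
  have hFG : ∀ j, F (G j) = j := by
    intro j
    rw [eqF (hxG j)]
    have : (⟨G j, hxG j⟩ : {i // x i = y j}) = (e (y j)).symm ⟨j, rfl⟩ := Subtype.ext rfl
    rw [this, Equiv.apply_symm_apply]
  exact ⟨⟨F, G, hGF, hFG⟩, funext fun i => hyF i⟩

private theorem aux_perm_card {X : Type} [DecidableEq X] {n : ℕ} (x : Fin n → X)
    (g : Equiv.Perm (Fin n)) (a : X) :
    (univ.filter fun i => x (g i) = a).card = (univ.filter fun i => x i = a).card := by
  rw [← Fintype.card_subtype, ← Fintype.card_subtype]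
  exact Fintype.card_congr (g.subtypeEquiv fun i => Iff.rfl)

private theorem aux_card {X : Type} [Fintype X] [DecidableEq X] {n : ℕ} (c : X → ℕ)
    (hc : ∑ a, c a = n) :
    (univ.filter fun x : Fin n → X =>
      ∀ a, (univ.filter fun i => x i = a).card = c a).card * ∏ a, (c a)! = n ! := by
  classical
  obtain ⟨x₀, hx₀⟩ := aux_exists c hc
  set T : Finset (Fin n → X) :=
    univ.filter fun x : Fin n → X => ∀ a, (univ.filter fun i => x i = a).card = c a with hT
  have hmaps : ∀ g : Equiv.Perm (Fin n), g ∈ (univ : Finset (Equiv.Perm (Fin n))) →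
      x₀ ∘ ⇑g ∈ T := by
    intro g _
    simp only [hT, mem_filter, mem_univ, true_and]
    intro a
    exact (aux_perm_card x₀ g a).trans (hx₀ a)
  have hstab : (univ.filter fun g : Equiv.Perm (Fin n) => x₀ ∘ ⇑g = x₀).card
      = ∏ a, (c a)! := by
    rw [← Fintype.card_subtype, DomMulAct.stabilizer_card]
    refine Finset.prod_congr rfl fun a _ => ?_
    rw [Fintype.card_subtype, hx₀ a]
  have hfiber : ∀ x ∈ T,
      (univ.filter fun g : Equiv.Perm (Fin n) => x₀ ∘ ⇑g = x).card = ∏ a, (c a)! := by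
    intro x hx
    simp only [hT, mem_filter, mem_univ, true_and] at hx
    obtain ⟨σ, hσ⟩ := aux_glue x x₀ (fun a => by rw [hx a, hx₀ a])
    rw [← hstab]
    apply Finset.card_bij' (fun g _ => σ.symm.trans g) (fun h _ => σ.trans h)
    · intro g hg
      simp only [mem_filter, mem_univ, true_and] at hg ⊢
      funext j
      have : x₀ (g (σ.symm j)) = x (σ.symm j) := congrFun hg (σ.symm j)
      simp only [Function.comp, Equiv.trans_apply]
      rw [this, ← hσ]
      simp
    · intro h hh
      simp only [mem_filter, mem_univ, true_and] at hh ⊢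
      funext j
      simp only [Function.comp, Equiv.trans_apply]
      have : x₀ (h (σ j)) = x₀ (σ j) := congrFun hh (σ j)
      rw [this, ← hσ]; rfl
    · intro g _; ext j; simp
    · intro h _; ext j; simp
  have := Finset.card_eq_sum_card_fiberwise hmaps
  rw [Finset.card_univ, Fintype.card_perm, Fintype.card_fin] at this
  rw [Finset.sum_congr rfl hfiber] at this
  rw [Finset.sum_const, smul_eq_mul] at this
  omega

private theorem aux_cmp {X : Type} [Fintype X] [DecidableEq X] {n : ℕ} (c d : X → ℕ)
    (hc : ∑ a, c a = n) (hd : ∑ a, d a = n) :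
    (univ.filter fun x : Fin n → X =>
      ∀ a, (univ.filter fun i => x i = a).card = d a).card * ∏ a, (c a) ^ (d a)
    ≤ (univ.filter fun x : Fin n → X =>
      ∀ a, (univ.filter fun i => x i = a).card = c a).card * ∏ a, (c a) ^ (c a) := by
  set A := (univ.filter fun x : Fin n → X =>
      ∀ a, (univ.filter fun i => x i = a).card = d a).card
  set B := (univ.filter fun x : Fin n → X =>
      ∀ a, (univ.filter fun i => x i = a).card = c a).card
  have hK : 0 < (∏ a, (d a)!) * ∏ a, (c a)! :=
    Nat.mul_pos (Finset.prod_pos fun a _ => Nat.factorial_pos _)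
      (Finset.prod_pos fun a _ => Nat.factorial_pos _)
  have pm1 : ∏ a, ((c a)! * (c a) ^ (d a)) = (∏ a, (c a)!) * ∏ a, (c a) ^ (d a) :=
    Finset.prod_mul_distrib
  have pm2 : ∏ a, ((d a)! * (c a) ^ (c a)) = (∏ a, (d a)!) * ∏ a, (c a) ^ (c a) :=
    Finset.prod_mul_distrib
  have key : ∏ a, ((c a)! * (c a) ^ (d a)) ≤ ∏ a, ((d a)! * (c a) ^ (c a)) :=
    Finset.prod_le_prod' fun a _ => aux_nat (c a) (d a)
  have h1 : (A * ∏ a, (c a) ^ (d a)) * ((∏ a, (d a)!) * ∏ a, (c a)!)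
      = n ! * ((∏ a, (c a)!) * ∏ a, (c a) ^ (d a)) := by
    rw [← aux_card d hd]; ring
  have h2 : (B * ∏ a, (c a) ^ (c a)) * ((∏ a, (d a)!) * ∏ a, (c a)!)
      = n ! * ((∏ a, (d a)!) * ∏ a, (c a) ^ (c a)) := by
    rw [← aux_card c hc]; ring
  have key2 : n ! * ((∏ a, (c a)!) * ∏ a, (c a) ^ (d a))
      ≤ n ! * ((∏ a, (d a)!) * ∏ a, (c a) ^ (c a)) := by
    rw [← pm1, ← pm2]; exact Nat.mul_le_mul_left _ key
  rw [← h1, ← h2] at key2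
  exact Nat.le_of_mul_le_mul_right key2 hK

private theorem aux_prodR {X : Type} [Fintype X] [DecidableEq X] {n : ℕ} (R : X → ℝ)
    (x : Fin n → X) :
    ∏ i, R (x i) = ∏ a, R a ^ (univ.filter fun i => x i = a).card := by
  rw [← Finset.prod_fiberwise_of_maps_to (fun i _ => mem_univ (x i)) (fun i => R (x i))]
  refine Finset.prod_congr rfl fun a _ => ?_
  rw [Finset.prod_congr rfl (fun i hi => by rw [(mem_filter.mp hi).2]), Finset.prod_const]

private theorem aux_sumT {X : Type} [Fintype X] [DecidableEq X] {n : ℕ} (R : X → ℝ) (e : X → ℕ) :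
    ∑ x ∈ (univ.filter fun x : Fin n → X => ∀ a, (univ.filter fun i => x i = a).card = e a),
      ∏ i, R (x i)
    = ((univ.filter fun x : Fin n → X =>
        ∀ a, (univ.filter fun i => x i = a).card = e a).card : ℝ) * ∏ a, R a ^ e a := by
  rw [Finset.sum_congr rfl (fun x hx => ?_), Finset.sum_const, nsmul_eq_mul]
  rw [aux_prodR R x]
  exact Finset.prod_congr rfl fun a _ => by rw [(mem_filter.mp hx).2 a]

private def typeOf {X : Type} [DecidableEq X] {n : ℕ} (x : Fin n → X) (a : X) : Fin (n+1) :=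
  ⟨(univ.filter fun i => x i = a).card,
    Nat.lt_succ_of_le (le_trans (Finset.card_filter_le _ _) (by simp))⟩

/-- Probability of a type class: for a type `P ∈ P_n(X)` (counts `c` with `∑ c = n`) and any
distribution `Q` on `X`, `|P_n(X)|⁻¹ · exp(-n·D(P‖Q)) ≤ Q^n(T_P) ≤ exp(-n·D(P‖Q))`,
where `exp(-n·D(P‖Q))` is interpreted as `0` when `D(P‖Q) = ∞`. -/
theorem stmt3 (X : Type) [Fintype X] [DecidableEq X] (n : ℕ) (hn : 0 < n)
    (c : X → ℕ) (hc : ∑ a, c a = n)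
    (Q : X → ℝ) (hQ0 : ∀ a, 0 ≤ Q a) (hQ1 : ∑ a, Q a = 1) :
    let N : ℕ := (Finset.univ.filter (fun d : X → Fin (n + 1) => ∑ a, (d a : ℕ) = n)).card
    let T : Finset (Fin n → X) := Finset.univ.filter
      (fun x => ∀ a, (Finset.univ.filter (fun i => x i = a)).card = c a)
    let D : ℝ := ∑ a, ((c a : ℝ) / n) * Real.log (((c a : ℝ) / n) / Q a)
    let E : ℝ := if ∀ a, 0 < c a → 0 < Q a then Real.exp (-(n * D)) else 0
    ((N : ℝ))⁻¹ * E ≤ ∑ x ∈ T, ∏ i, Q (x i) ∧ (∑ x ∈ T, ∏ i, Q (x i)) ≤ E := by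
  intro N T D E
  classical
  have hn0 : (n : ℝ) ≠ 0 := Nat.cast_ne_zero.mpr hn.ne'
  have hnpos : (0 : ℝ) < n := by exact_mod_cast hn
  set p : X → ℝ := fun a => (c a : ℝ) / n with hp
  have hp0 : ∀ a, 0 ≤ p a := fun a => by
    simp only [hp]; positivity
  have hpsum : ∑ a, p a = 1 := by
    simp only [hp]
    rw [← Finset.sum_div, show (∑ a, ((c a : ℝ))) = (n : ℝ) by exact_mod_cast hc]
    exact div_self hn0
  -- total probability 1 under p
  have htotal : ∑ x : Fin n → X, ∏ i, p (x i) = 1 := by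
    have h := Finset.prod_univ_sum (fun _ : Fin n => (univ : Finset X)) (fun _ a => p a)
    rw [Fintype.piFinset_univ] at h
    rw [← h, Finset.prod_congr rfl (fun i _ => hpsum), Finset.prod_const, one_pow]
  -- the sum over T with any R
  have hTsum : ∀ R : X → ℝ, ∑ x ∈ T, ∏ i, R (x i) = (T.card : ℝ) * ∏ a, R a ^ c a :=
    fun R => aux_sumT R c
  -- S ≤ 1
  have hS1 : (T.card : ℝ) * ∏ a, p a ^ c a ≤ 1 := by
    rw [← hTsum p, ← htotal]
    exact Finset.sum_le_sum_of_subset_of_nonneg (Finset.subset_univ T)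
      (fun x _ _ => Finset.prod_nonneg fun i _ => hp0 (x i))
  -- 1 ≤ N * S
  have hNS : 1 ≤ (N : ℝ) * ((T.card : ℝ) * ∏ a, p a ^ c a) := by
    have hmaps : ∀ x : Fin n → X, x ∈ (univ : Finset (Fin n → X)) →
        typeOf x ∈ (univ.filter fun d : X → Fin (n + 1) => ∑ a, (d a : ℕ) = n) := by
      intro x _
      simp only [mem_filter, mem_univ, true_and]
      have h := Finset.card_eq_sum_card_fiberwise
        (fun i (_ : i ∈ (univ : Finset (Fin n))) => mem_univ (x i))
      simp only [Finset.card_univ, Fintype.card_fin] at h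
      exact (Finset.sum_congr rfl fun a _ => rfl).trans h.symm
    have hfib := Finset.sum_fiberwise_of_maps_to hmaps (fun x => ∏ i, p (x i))
    calc (1 : ℝ)
        = ∑ d ∈ (univ.filter fun d : X → Fin (n + 1) => ∑ a, (d a : ℕ) = n),
            ∑ x ∈ univ.filter fun x => typeOf x = d, ∏ i, p (x i) := by
          rw [hfib, htotal]
      _ ≤ ∑ _d ∈ (univ.filter fun d : X → Fin (n + 1) => ∑ a, (d a : ℕ) = n),
            ((T.card : ℝ) * ∏ a, p a ^ c a) := by
          apply Finset.sum_le_sum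
          intro d hd
          have hdn : ∑ a, ((d a : ℕ)) = n := (mem_filter.mp hd).2
          have hfe : (univ.filter fun x : Fin n → X => typeOf x = d)
              = univ.filter fun x : Fin n → X =>
                  ∀ a, (univ.filter fun i => x i = a).card = (d a : ℕ) := by
            apply Finset.filter_congr
            intro x _
            rw [funext_iff]
            exact forall_congr' fun a => Fin.ext_iff
          rw [hfe, aux_sumT p (fun a => (d a : ℕ))]
          -- reduce to the natural-number comparison
          have hpow : ∀ (e : X → ℕ), (∑ a, e a = n) →
              ∏ a, p a ^ e a = (∏ a, ((c a : ℝ)) ^ e a) / (n : ℝ) ^ n := by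
            intro e he
            simp only [hp, div_pow]
            rw [Finset.prod_div_distrib, Finset.prod_pow_eq_pow_sum, he]
          rw [hpow (fun a => (d a : ℕ)) hdn, hpow c hc, mul_div_assoc', mul_div_assoc']
          apply div_le_div_of_nonneg_right ?_ (by positivity)
          · have := aux_cmp c (fun a => (d a : ℕ)) hc hdn
            have hcast : ((((univ.filter fun x : Fin n → X =>
                ∀ a, (univ.filter fun i => x i = a).card = (d a : ℕ)).card)
                * ∏ a, (c a) ^ ((d a : ℕ)) : ℕ) : ℝ)
                ≤ (((T.card * ∏ a, (c a) ^ (c a) : ℕ)) : ℝ) := by exact_mod_cast this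
            push_cast at hcast
            convert hcast using 2
      _ = (N : ℝ) * ((T.card : ℝ) * ∏ a, p a ^ c a) := by
          rw [Finset.sum_const, nsmul_eq_mul]
  by_cases hQc : ∀ a, 0 < c a → 0 < Q a
  · -- good case
    have hEdef : E = Real.exp (-(n * D)) := if_pos hQc
    have hDdef : D = ∑ a, p a * Real.log (p a / Q a) := rfl
    have hexp : Real.exp (-(n * D)) = ∏ a, (Q a ^ c a / p a ^ c a) := by
      rw [hDdef, Finset.mul_sum, ← Finset.sum_neg_distrib, Real.exp_sum]
      refine Finset.prod_congr rfl fun a _ => ?_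
      rcases Nat.eq_zero_or_pos (c a) with h0 | hpos
      · have hpa : p a = 0 := by simp [hp, h0]
        rw [hpa]; simp [h0]
      · have hQa : 0 < Q a := hQc a hpos
        have hca : (0:ℝ) < (c a : ℝ) := by exact_mod_cast hpos
        have hpa : 0 < p a := by simp only [hp]; positivity
        have hnp : (n : ℝ) * p a = (c a : ℝ) := by
          simp only [hp]; field_simp
        rw [← mul_assoc, hnp, Real.exp_neg]
        rw [show ((c a : ℝ)) * Real.log (p a / Q a) = Real.log ((p a / Q a) ^ c a) by
          rw [Real.log_pow]]
        rw [Real.exp_log (by positivity), div_pow, inv_div]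
    have hprob : ∑ x ∈ T, ∏ i, Q (x i)
        = ((T.card : ℝ) * ∏ a, p a ^ c a) * Real.exp (-(n * D)) := by
      rw [hTsum Q, hexp, mul_assoc, ← Finset.prod_mul_distrib]
      congr 1
      refine Finset.prod_congr rfl fun a _ => ?_
      rcases Nat.eq_zero_or_pos (c a) with h0 | hpos
      · simp [h0]
      · have hpa : 0 < p a := by
          have hca : (0:ℝ) < (c a : ℝ) := by exact_mod_cast hpos
          simp only [hp]; positivity
        field_simp
    rw [hprob, hEdef]
    have hSnn : 0 ≤ (T.card : ℝ) * ∏ a, p a ^ c a := by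
      have : ∀ a, 0 ≤ p a ^ c a := fun a => pow_nonneg (hp0 a) _
      positivity
    constructor
    · apply mul_le_mul_of_nonneg_right ?_ (Real.exp_nonneg _)
      have hNpos : (0:ℝ) < N := by
        rcases Nat.eq_zero_or_pos N with h | h
        · exfalso
          rw [h] at hNS
          norm_num at hNS
        · exact_mod_cast h
      rw [inv_eq_one_div, div_le_iff₀ hNpos]
      calc (1:ℝ) ≤ (N : ℝ) * ((T.card : ℝ) * ∏ a, p a ^ c a) := hNS
        _ = ((T.card : ℝ) * ∏ a, p a ^ c a) * N := by ring
    · calc ((T.card : ℝ) * ∏ a, p a ^ c a) * Real.exp (-(n * D))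
          ≤ 1 * Real.exp (-(n * D)) :=
            mul_le_mul_of_nonneg_right hS1 (Real.exp_nonneg _)
        _ = Real.exp (-(n * D)) := one_mul _
  · have hEdef : E = 0 := if_neg hQc
    push_neg at hQc
    obtain ⟨a₀, hca₀, hQa₀⟩ := hQc
    have hQ0a : Q a₀ = 0 := le_antisymm hQa₀ (hQ0 a₀)
    have hzero : ∑ x ∈ T, ∏ i, Q (x i) = 0 := by
      rw [hTsum Q]
      rw [Finset.prod_eq_zero (mem_univ a₀) (by rw [hQ0a]; exact zero_pow hca₀.ne')]
      ring
    rw [hzero, hEdef]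
    norm_num
end

section
/- The ε-information spectrum divergence satisfies the sifting bound: if P is a distribution on finite Z and Q = ∑_k α_k Q_k is a countable convex combination of distributions Q_k with weights α_k > 0 summing to 1, then D_s^ε(P‖Q) ≤ inf_k { D_s^ε(P‖Q_k) + log(1/α_k) }. -/
open scoped Classical

/-- Log-likelihood ratio `log(P(z)/Q(z))` with extended-real conventions:
`+∞` when `Q(z) = 0 < P(z)` and `-∞` when `P(z) = 0`. -/
noncomputable def specLLR {Z : Type} (P Q : Z → ℝ) (z : Z) : EReal :=
  if P z = 0 then ⊥ else if Q z = 0 then ⊤ else ((Real.log (P z / Q z) : ℝ) : EReal)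

/-- The ε-information spectrum divergence
`D_s^ε(P‖Q) = sup{R : P({z : log(P(z)/Q(z)) ≤ R}) ≤ ε}` (extended-real valued). -/
noncomputable def Ds {Z : Type} [Fintype Z] (P Q : Z → ℝ) (ε : ℝ) : EReal :=
  sSup {R : EReal | ∑ z ∈ Finset.univ.filter (fun z => specLLR P Q z ≤ R), P z ≤ ε}

/-- Sifting from a countable convex combination: if `Q = ∑_k α_k Q_k` with `α_k > 0`
summing to one, then `D_s^ε(P‖Q) ≤ inf_k { D_s^ε(P‖Q_k) + log(1/α_k) }`. -/
theorem stmt7 {Z : Type} [Fintype Z] {ι : Type} [Countable ι] [Nonempty ι]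
    (P Q : Z → ℝ) (Qk : ι → Z → ℝ) (α : ι → ℝ)
    (hP0 : ∀ z, 0 ≤ P z) (hP1 : ∑ z, P z = 1)
    (hQk0 : ∀ k z, 0 ≤ Qk k z) (hQk1 : ∀ k, ∑ z, Qk k z = 1)
    (hα : ∀ k, 0 < α k) (hαsum : ∑' k, α k = 1)
    (hQ : ∀ z, Q z = ∑' k, α k * Qk k z)
    (ε : ℝ) (hε0 : 0 < ε) (hε1 : ε < 1) :
    Ds P Q ε ≤ ⨅ k, (Ds P (Qk k) ε + ((Real.log (1 / α k) : ℝ) : EReal)) := by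
  have hsumα : Summable α := by
    by_contra h
    rw [tsum_eq_zero_of_not_summable h] at hαsum
    norm_num at hαsum
  -- each Qk k z ≤ 1
  have hQkle : ∀ k z, Qk k z ≤ 1 := by
    intro k z
    rw [← hQk1 k]
    exact Finset.single_le_sum (fun i _ => hQk0 k i) (Finset.mem_univ z)
  have hsum2 : ∀ z, Summable (fun j => α j * Qk j z) := by
    intro z
    refine Summable.of_nonneg_of_le (fun j => mul_nonneg (hα j).le (hQk0 j z))
      (fun j => ?_) hsumα
    calc α j * Qk j z ≤ α j * 1 := by
          exact mul_le_mul_of_nonneg_left (hQkle j z) (hα j).le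
      _ = α j := mul_one _
  have hQge : ∀ k z, α k * Qk k z ≤ Q z := by
    intro k z
    rw [hQ z]
    exact Summable.le_tsum (hsum2 z) k (fun j _ => mul_nonneg (hα j).le (hQk0 j z))
  refine le_iInf fun k => ?_
  set c : ℝ := Real.log (1 / α k) with hc
  -- pointwise LLR inequality
  have hLLR : ∀ z, specLLR P Q z ≤ specLLR P (Qk k) z + (c : EReal) := by
    intro z
    unfold specLLR
    by_cases hPz : P z = 0
    · simp [hPz]
    by_cases hQkz : Qk k z = 0
    · simp [hPz, hQkz]
    have hQkpos : 0 < Qk k z := lt_of_le_of_ne (hQk0 k z) (Ne.symm hQkz)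
    have hQpos : 0 < Q z := lt_of_lt_of_le (mul_pos (hα k) hQkpos) (hQge k z)
    have hQz : Q z ≠ 0 := ne_of_gt hQpos
    simp only [hPz, hQkz, hQz, if_false]
    rw [← EReal.coe_add]
    apply EReal.coe_le_coe_iff.mpr
    have hPpos : 0 < P z := lt_of_le_of_ne (hP0 z) (Ne.symm hPz)
    have key : P z / Q z ≤ P z / (α k * Qk k z) :=
      div_le_div_of_nonneg_left (hP0 z) (mul_pos (hα k) hQkpos) (hQge k z)
    calc Real.log (P z / Q z) ≤ Real.log (P z / (α k * Qk k z)) :=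
          Real.log_le_log (div_pos hPpos hQpos) key
      _ = Real.log (P z / Qk k z) + c := by
          rw [hc]
          rw [show P z / (α k * Qk k z) = (P z / Qk k z) * (1 / α k) by
            field_simp]
          rw [Real.log_mul (ne_of_gt (div_pos hPpos hQkpos))
            (ne_of_gt (div_pos one_pos (hα k)))]
  refine sSup_le fun R hR => ?_
  simp only [Set.mem_setOf_eq] at hR
  induction R using EReal.rec with
  | bot => exact bot_le
  | top =>
    exfalso
    have : ∑ z ∈ Finset.univ.filter (fun z => specLLR P Q z ≤ (⊤ : EReal)), P z = 1 := by
      rw [Finset.filter_true_of_mem (fun z _ => le_top)]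
      exact hP1
    linarith [hR, this]
  | coe r =>
    have hmem : ((r - c : ℝ) : EReal) ∈
        {R : EReal | ∑ z ∈ Finset.univ.filter (fun z => specLLR P (Qk k) z ≤ R), P z ≤ ε} := by
      simp only [Set.mem_setOf_eq]
      refine le_trans (Finset.sum_le_sum_of_subset_of_nonneg ?_
        (fun z _ _ => hP0 z)) hR
      intro z hz
      simp only [Finset.mem_filter, Finset.mem_univ, true_and] at hz ⊢
      calc specLLR P Q z ≤ specLLR P (Qk k) z + (c : EReal) := hLLR z
        _ ≤ ((r - c : ℝ) : EReal) + (c : EReal) := add_le_add_left hz _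
        _ = ((r : ℝ) : EReal) := by rw [← EReal.coe_add]; norm_num
    have h1 : ((r - c : ℝ) : EReal) ≤ Ds P (Qk k) ε := le_sSup hmem
    calc ((r : ℝ) : EReal) = ((r - c : ℝ) : EReal) + (c : EReal) := by
          rw [← EReal.coe_add]; norm_num
      _ ≤ Ds P (Qk k) ε + (c : EReal) := add_le_add_left h1 _
end

section
/- If Q̃ and Q are distributions on finite Z with Q̃(z) ≤ γ·Q(z) for all z and some γ > 0, then D_s^ε(P‖Q̃) ≥ D_s^ε(P‖Q) - log γ for every distribution P on Z and ε ∈ (0,1). -/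
open scoped Classical

/-- Domination bound: if `Q̃(z) ≤ γ·Q(z)` for all `z`, then
`D_s^ε(P‖Q̃) ≥ D_s^ε(P‖Q) - log γ`. -/
theorem stmt8 {Z : Type} [Fintype Z] (P Q Qt : Z → ℝ)
    (hP0 : ∀ z, 0 ≤ P z) (hP1 : ∑ z, P z = 1)
    (hQ0 : ∀ z, 0 ≤ Q z) (hQ1 : ∑ z, Q z = 1)
    (hQt0 : ∀ z, 0 ≤ Qt z) (hQt1 : ∑ z, Qt z = 1)
    (γ : ℝ) (hγ : 0 < γ) (hdom : ∀ z, Qt z ≤ γ * Q z)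
    (ε : ℝ) (hε0 : 0 < ε) (hε1 : ε < 1) :
    Ds P Q ε - ((Real.log γ : ℝ) : EReal) ≤ Ds P Qt ε := by
  set c : EReal := ((Real.log γ : ℝ) : EReal) with hc
  apply EReal.sub_le_of_le_add
  apply sSup_le
  intro R hR
  -- show R - c is in the Qt set
  have hmem : R - c ∈ {R : EReal | ∑ z ∈ Finset.univ.filter
      (fun z => specLLR P Qt z ≤ R), P z ≤ ε} := by
    refine le_trans (Finset.sum_le_sum_of_subset_of_nonneg ?_ (fun z _ _ => hP0 z)) hR
    intro z hz
    simp only [Finset.mem_filter, Finset.mem_univ, true_and] at hz ⊢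
    -- specLLR P Qt z ≤ R - c ⟹ specLLR P Q z ≤ R
    by_cases hPz : P z = 0
    · simp [specLLR, hPz]
    by_cases hQtz : Qt z = 0
    · -- specLLR P Qt z = ⊤ ≤ R - c ⟹ R - c = ⊤ ⟹ R = ⊤
      have : specLLR P Qt z = ⊤ := by simp [specLLR, hPz, hQtz]
      rw [this, top_le_iff] at hz
      have hRtop : R = ⊤ := by
        have : R = R - c + c := by rw [hc, EReal.sub_add_cancel]
        rw [this, hz, hc]
        simp
      simp [hRtop]
    · have hQz : Q z ≠ 0 := by
        intro h
        have := hdom z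
        rw [h, mul_zero] at this
        exact hQtz (le_antisymm this (hQt0 z))
      have hQtpos : 0 < Qt z := lt_of_le_of_ne (hQt0 z) (Ne.symm hQtz)
      have hQpos : 0 < Q z := lt_of_le_of_ne (hQ0 z) (Ne.symm hQz)
      have hPpos : 0 < P z := lt_of_le_of_ne (hP0 z) (Ne.symm hPz)
      rw [specLLR] at hz ⊢
      simp only [hPz, hQtz, hQz, if_false] at hz ⊢
      -- hz : (log (P z / Qt z) : EReal) ≤ R - c
      have key : (Real.log (P z / Q z) : EReal) ≤ (Real.log (P z / Qt z) : EReal) + c := by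
        rw [hc, ← EReal.coe_add, EReal.coe_le_coe_iff]
        rw [Real.log_div (ne_of_gt hPpos) hQz, Real.log_div (ne_of_gt hPpos) hQtz]
        have : Real.log (Qt z) ≤ Real.log γ + Real.log (Q z) := by
          rw [← Real.log_mul (ne_of_gt hγ) hQz]
          exact Real.log_le_log hQtpos (hdom z)
        linarith
      refine key.trans ?_
      have := EReal.add_le_of_le_sub (a := (Real.log (P z / Qt z) : EReal)) (b := R) (c := c) hz
      exact this
  calc R = R - c + c := by
        rw [hc, EReal.sub_add_cancel]
      _ ≤ _ := by
        apply add_le_add_left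
        exact le_sSup hmem
end

section
/- Symbol-wise relaxation of the information spectrum divergence: for channels W, V from finite X to finite Y and any input distribution P on X, D_s^ε(P×W ‖ P×V) ≤ sup_{x ∈ X} D_s^ε(W(·|x) ‖ V(·|x)). -/
open scoped Classical

lemma llr_cancel {X Y : Type} (P : X → ℝ) (W V : X → Y → ℝ) (x : X) (y : Y)
    (hx : P x ≠ 0) :
    specLLR (fun p : X × Y => P p.1 * W p.1 p.2) (fun p : X × Y => P p.1 * V p.1 p.2) (x, y)
      = specLLR (W x) (V x) y := by
  unfold specLLR
  simp only [mul_eq_zero, hx, false_or]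
  by_cases h1 : W x y = 0
  · simp [h1]
  · simp only [h1, if_false]
    by_cases h2 : V x y = 0
    · simp [h2]
    · simp [h2, mul_div_mul_left _ _ hx]

/-- Symbol-wise relaxation: for channels `W, V : X → Y` and input distribution `P`,
`D_s^ε(P×W ‖ P×V) ≤ sup_{x} D_s^ε(W(·|x) ‖ V(·|x))`. -/
theorem stmt9 {X Y : Type} [Fintype X] [Fintype Y]
    (P : X → ℝ) (W V : X → Y → ℝ)
    (hP0 : ∀ x, 0 ≤ P x) (hP1 : ∑ x, P x = 1)
    (hW0 : ∀ x y, 0 ≤ W x y) (hW1 : ∀ x, ∑ y, W x y = 1)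
    (hV0 : ∀ x y, 0 ≤ V x y) (hV1 : ∀ x, ∑ y, V x y = 1)
    (ε : ℝ) (hε0 : 0 < ε) (hε1 : ε < 1) :
    Ds (fun p : X × Y => P p.1 * W p.1 p.2) (fun p : X × Y => P p.1 * V p.1 p.2) ε
      ≤ ⨆ x, Ds (W x) (V x) ε := by
  apply sSup_le
  intro R hR
  by_contra hcon
  rw [not_le] at hcon
  set m : X → ℝ := fun x =>
    ∑ y ∈ Finset.univ.filter (fun y => specLLR (W x) (V x) y ≤ R), W x y with hm
  have key : ∀ x, ε < m x := by
    intro x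
    by_contra h
    rw [not_lt] at h
    have h1 : R ≤ Ds (W x) (V x) ε := le_sSup h
    exact absurd (h1.trans (le_iSup (fun x => Ds (W x) (V x) ε) x)) (not_le.mpr hcon)
  have hsum : ∑ p ∈ Finset.univ.filter (fun p : X × Y =>
      specLLR (fun p : X × Y => P p.1 * W p.1 p.2) (fun p : X × Y => P p.1 * V p.1 p.2) p ≤ R),
      P p.1 * W p.1 p.2 = ∑ x, P x * m x := by
    rw [Finset.sum_filter, Fintype.sum_prod_type]
    refine Finset.sum_congr rfl (fun x _ => ?_)
    by_cases hx : P x = 0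
    · simp [hx]
    · rw [hm]
      simp only
      rw [Finset.sum_filter, Finset.mul_sum]
      refine Finset.sum_congr rfl (fun y _ => ?_)
      rw [llr_cancel P W V x y hx, mul_ite, mul_zero]
  have hlt : ε < ∑ x, P x * m x := by
    calc ε = ∑ x, P x * ε := by rw [← Finset.sum_mul, hP1, one_mul]
    _ < ∑ x, P x * m x := by
        obtain ⟨x0, hx0⟩ : ∃ x, 0 < P x := by
          by_contra h
          push_neg at h
          have : ∑ x, P x = 0 := Finset.sum_eq_zero (fun x _ => le_antisymm (h x) (hP0 x))
          rw [hP1] at this; norm_num at this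
        refine Finset.sum_lt_sum (fun x _ => ?_) ⟨x0, Finset.mem_univ x0, ?_⟩
        · exact mul_le_mul_of_nonneg_left (key x).le (hP0 x)
        · exact mul_lt_mul_of_pos_left (key x0) hx0
  rw [Set.mem_setOf_eq, hsum] at hR
  exact absurd hR (not_le.mpr hlt)
end

section
/- Lower bound relating divergences: for all distributions P, Q on a finite set Z and ε ∈ (0,1), D_h^ε(P‖Q) ≥ D_s^ε(P‖Q) - log(1/(1-ε)). -/
open scoped Classical

/-- Minimum type-II error over randomized tests with type-I error at most `ε`. -/
noncomputable def betaHT {Z : Type} [Fintype Z] (P Q : Z → ℝ) (ε : ℝ) : ℝ :=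
  sInf {b : ℝ | ∃ δ : Z → ℝ, (∀ z, 0 ≤ δ z ∧ δ z ≤ 1) ∧
    (∑ z, P z * δ z) ≤ ε ∧ b = ∑ z, Q z * (1 - δ z)}

/-- The ε-hypothesis testing divergence, `⊤` when `β_{1-ε}(P,Q) = 0`. -/
noncomputable def Dh {Z : Type} [Fintype Z] (P Q : Z → ℝ) (ε : ℝ) : EReal :=
  if betaHT P Q ε = 0 then ⊤ else ((-Real.log (betaHT P Q ε / (1 - ε)) : ℝ) : EReal)

/-- Lower bound relating divergences: `D_h^ε(P‖Q) ≥ D_s^ε(P‖Q) - log(1/(1-ε))`. -/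
theorem stmt10 {Z : Type} [Fintype Z] (P Q : Z → ℝ)
    (hP0 : ∀ z, 0 ≤ P z) (hP1 : ∑ z, P z = 1)
    (hQ0 : ∀ z, 0 ≤ Q z) (hQ1 : ∑ z, Q z = 1)
    (ε : ℝ) (hε0 : 0 < ε) (hε1 : ε < 1) :
    Ds P Q ε - ((Real.log (1 / (1 - ε)) : ℝ) : EReal) ≤ Dh P Q ε := by
  have h1ε : (0:ℝ) < 1 - ε := by linarith
  set β := betaHT P Q ε with hβdef
  have hβ0 : 0 ≤ β := by
    apply le_csInf
    · exact ⟨1, fun _ => 0, fun z => ⟨le_refl 0, zero_le_one⟩,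
        by simp; linarith, by simp [hQ1]⟩
    · rintro b ⟨δ, hδ, hI, rfl⟩
      apply Finset.sum_nonneg
      intro z _
      exact mul_nonneg (hQ0 z) (by linarith [(hδ z).2])
  rcases eq_or_ne β 0 with h0 | h0
  · rw [Dh, ← hβdef, if_pos h0]
    exact le_top
  · have hβpos : 0 < β := lt_of_le_of_ne hβ0 (Ne.symm h0)
    have hbdd : BddBelow {b : ℝ | ∃ δ : Z → ℝ, (∀ z, 0 ≤ δ z ∧ δ z ≤ 1) ∧
        (∑ z, P z * δ z) ≤ ε ∧ b = ∑ z, Q z * (1 - δ z)} := by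
      refine ⟨0, ?_⟩
      rintro b ⟨δ, hδ, hI, rfl⟩
      apply Finset.sum_nonneg
      intro z _
      exact mul_nonneg (hQ0 z) (by linarith [(hδ z).2])
    have key : Ds P Q ε ≤ ((-Real.log β : ℝ) : EReal) := by
      apply sSup_le
      rintro R hR
      induction R using EReal.rec with
      | bot => exact bot_le
      | top =>
        exfalso
        simp only [Set.mem_setOf_eq] at hR
        rw [Finset.filter_true_of_mem (fun z _ => le_top), hP1] at hR
        linarith
      | coe r =>
        simp only [Set.mem_setOf_eq] at hR
        rw [EReal.coe_le_coe_iff]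
        set δ : Z → ℝ := fun z => if specLLR P Q z ≤ (r : EReal) then 1 else 0 with hδdef
        have hmem : (∑ z, Q z * (1 - δ z)) ∈ {b : ℝ | ∃ δ : Z → ℝ,
            (∀ z, 0 ≤ δ z ∧ δ z ≤ 1) ∧ (∑ z, P z * δ z) ≤ ε ∧
            b = ∑ z, Q z * (1 - δ z)} := by
          refine ⟨δ, fun z => ?_, ?_, rfl⟩
          · simp only [hδdef]
            split <;> norm_num
          · have : (∑ z, P z * δ z) =
                ∑ z ∈ Finset.univ.filter (fun z => specLLR P Q z ≤ (r : EReal)), P z := by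
              rw [Finset.sum_filter]
              apply Finset.sum_congr rfl
              intro z _
              simp only [hδdef]
              split <;> simp
            rw [this]
            exact hR
        have hβle : β ≤ ∑ z, Q z * (1 - δ z) := csInf_le hbdd hmem
        have hsum : (∑ z, Q z * (1 - δ z)) ≤ Real.exp (-r) := by
          have hterm : ∀ z ∈ Finset.univ, Q z * (1 - δ z) ≤ Real.exp (-r) * P z := by
            intro z _
            by_cases h : specLLR P Q z ≤ (r : EReal)
            · simp only [hδdef, if_pos h]
              simp only [sub_self, mul_zero]
              exact mul_nonneg (Real.exp_pos _).le (hP0 z)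
            · simp only [hδdef, if_neg h]
              rw [sub_zero, mul_one]
              by_cases hPz : P z = 0
              · exfalso
                apply h
                simp [specLLR, hPz]
              · by_cases hQz : Q z = 0
                · rw [hQz]
                  exact mul_nonneg (Real.exp_pos _).le (hP0 z)
                · have hPpos : 0 < P z := lt_of_le_of_ne (hP0 z) (Ne.symm hPz)
                  have hQpos : 0 < Q z := lt_of_le_of_ne (hQ0 z) (Ne.symm hQz)
                  have hllr : (r : EReal) < ((Real.log (P z / Q z) : ℝ) : EReal) := by
                    rw [specLLR, if_neg hPz, if_neg hQz] at h
                    exact lt_of_not_ge h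
                  have hr : r < Real.log (P z / Q z) := by
                    exact_mod_cast hllr
                  have hexp : Real.exp r < P z / Q z := by
                    calc Real.exp r < Real.exp (Real.log (P z / Q z)) :=
                          Real.exp_lt_exp.mpr hr
                      _ = P z / Q z := Real.exp_log (by positivity)
                  have hmul : Real.exp r * Q z < P z := by
                    rw [lt_div_iff₀ hQpos] at hexp
                    linarith
                  rw [Real.exp_neg]
                  have hepos : 0 < Real.exp r := Real.exp_pos r
                  rw [inv_mul_eq_div, le_div_iff₀ hepos]
                  nlinarith
          calc (∑ z, Q z * (1 - δ z)) ≤ ∑ z, Real.exp (-r) * P z :=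
                Finset.sum_le_sum hterm
            _ = Real.exp (-r) := by rw [← Finset.mul_sum, hP1, mul_one]
        have hβexp : β ≤ Real.exp (-r) := le_trans hβle hsum
        have : Real.log β ≤ -r := by
          calc Real.log β ≤ Real.log (Real.exp (-r)) :=
                Real.log_le_log hβpos hβexp
            _ = -r := Real.log_exp _
        linarith
    have hDh : Dh P Q ε = ((-Real.log (β / (1 - ε)) : ℝ) : EReal) := by
      rw [Dh, ← hβdef, if_neg h0]
    rw [hDh]
    have hre : (-Real.log (β / (1 - ε)) : ℝ) =
        (-Real.log β) - Real.log (1 / (1 - ε)) := by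
      rw [Real.log_div h0 (by linarith), one_div, Real.log_inv]
      ring
    rw [hre, EReal.coe_sub]
    simp only [sub_eq_add_neg]
    exact add_le_add_left key _
end

section
/- Feinstein-type converse kernel: for an (M, ε)-average-error code (f, φ) for a channel W : X → Y with uniform message M on {1,…,M}, and any output distribution Q on Y, letting δ(m, m̂) = 1{m ≠ m̂}, one has E over P_M × Q_{M̂} of δ equal to 1 - 1/M, where Q_{M̂} is the distribution of φ(Y) with Y ∼ Q. Consequently D_h^ε(P_{M M̂} ‖ P_M × Q_{M̂}) ≥ log M + log(1-ε). -/
open scoped Classical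

lemma keysum {M : ℕ} (m : Fin M) (g : Fin M → ℝ) :
    (∑ m', g m' * (if m ≠ m' then (1:ℝ) else 0)) = (∑ m', g m') - g m := by
  have h : ∀ m' : Fin M, g m' * (if m ≠ m' then (1:ℝ) else 0)
      = g m' - (if m = m' then g m' else 0) := by
    intro m'; by_cases h : m = m' <;> simp [h]
  rw [Finset.sum_congr rfl (fun m' _ => h m'), Finset.sum_sub_distrib,
    Finset.sum_ite_eq]
  simp

/-- Feinstein-type converse kernel: for an `(M,ε)`-average-error code `(f, φ)` for a
channel `W : X → Y` with uniform message, and any output distribution `Q` on `Y`,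
the test `δ(m,m̂) = 1{m ≠ m̂}` satisfies `E_{P_M × Q_{M̂}}[δ] = 1 - 1/M`; consequently
`D_h^ε(P_{M M̂} ‖ P_M × Q_{M̂}) ≥ log M + log(1-ε)`. -/
theorem stmt15 {X Y : Type} [Fintype X] [Fintype Y] (M : ℕ) (hM : 0 < M)
    (W : X → Y → ℝ) (hW0 : ∀ x y, 0 ≤ W x y) (hW1 : ∀ x, ∑ y, W x y = 1)
    (f : Fin M → X) (φ : Y → Fin M)
    (ε : ℝ) (hε0 : 0 < ε) (hε1 : ε < 1)
    (hcode : (1 / (M : ℝ)) *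
        ∑ m, ∑ y ∈ Finset.univ.filter (fun y => φ y ≠ m), W (f m) y ≤ ε)
    (Q : Y → ℝ) (hQ0 : ∀ y, 0 ≤ Q y) (hQ1 : ∑ y, Q y = 1) :
    (∑ m : Fin M, ∑ m' : Fin M,
        ((1 / (M : ℝ)) * ∑ y ∈ Finset.univ.filter (fun y => φ y = m'), Q y) *
          (if m ≠ m' then 1 else 0)) = 1 - 1 / (M : ℝ)
    ∧ ((Real.log M + Real.log (1 - ε) : ℝ) : EReal)
        ≤ Dh
            (fun p : Fin M × Fin M =>
              (1 / (M : ℝ)) * ∑ y ∈ Finset.univ.filter (fun y => φ y = p.2), W (f p.1) y)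
            (fun p : Fin M × Fin M =>
              (1 / (M : ℝ)) * ∑ y ∈ Finset.univ.filter (fun y => φ y = p.2), Q y) ε := by
  have hMpos : (0:ℝ) < (M:ℝ) := by exact_mod_cast hM
  have hQtot : ∑ m' : Fin M, ∑ y ∈ Finset.univ.filter (fun y => φ y = m'), Q y = 1 := by
    rw [Finset.sum_fiberwise]; exact hQ1
  have hWtot : ∀ m : Fin M,
      ∑ m' : Fin M, ∑ y ∈ Finset.univ.filter (fun y => φ y = m'), W (f m) y = 1 := by
    intro m; rw [Finset.sum_fiberwise]; exact hW1 (f m)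
  -- Part 1
  have part1 : (∑ m : Fin M, ∑ m' : Fin M,
        ((1 / (M : ℝ)) * ∑ y ∈ Finset.univ.filter (fun y => φ y = m'), Q y) *
          (if m ≠ m' then 1 else 0)) = 1 - 1 / (M : ℝ) := by
    have h1 : ∀ m : Fin M, (∑ m' : Fin M,
        ((1 / (M : ℝ)) * ∑ y ∈ Finset.univ.filter (fun y => φ y = m'), Q y) *
          (if m ≠ m' then 1 else 0))
        = 1 / (M:ℝ) - (1 / (M:ℝ)) * ∑ y ∈ Finset.univ.filter (fun y => φ y = m), Q y := by
      intro m
      rw [keysum m (fun m' =>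
        (1 / (M : ℝ)) * ∑ y ∈ Finset.univ.filter (fun y => φ y = m'), Q y),
        ← Finset.mul_sum, hQtot]
      ring
    rw [Finset.sum_congr rfl (fun m _ => h1 m), Finset.sum_sub_distrib,
      ← Finset.mul_sum, hQtot, Finset.sum_const, Finset.card_univ]
    simp only [Fintype.card_fin, nsmul_eq_mul, mul_one]
    field_simp
  refine ⟨part1, ?_⟩
  -- the deterministic test
  set δ0 : Fin M × Fin M → ℝ := fun p => if p.1 ≠ p.2 then 1 else 0 with hδ0
  -- Type-I error of the test
  have htypeI : (∑ p : Fin M × Fin M,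
      ((1 / (M : ℝ)) * ∑ y ∈ Finset.univ.filter (fun y => φ y = p.2), W (f p.1) y) * δ0 p) ≤ ε := by
    rw [Fintype.sum_prod_type]
    have h1 : ∀ m : Fin M, (∑ m' : Fin M,
        ((1 / (M : ℝ)) * ∑ y ∈ Finset.univ.filter (fun y => φ y = m'), W (f m) y) * δ0 (m, m'))
        = (1 / (M:ℝ)) * ∑ y ∈ Finset.univ.filter (fun y => φ y ≠ m), W (f m) y := by
      intro m
      have hsplit : ∑ y ∈ Finset.univ.filter (fun y => φ y ≠ m), W (f m) y
          = 1 - ∑ y ∈ Finset.univ.filter (fun y => φ y = m), W (f m) y := by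
        have h := Finset.sum_filter_add_sum_filter_not Finset.univ
          (fun y => φ y = m) (W (f m))
        have h2 : Finset.univ.filter (fun y => φ y ≠ m)
            = Finset.univ.filter (fun y => ¬ (φ y = m)) := by
          simp [ne_eq]
        rw [h2]
        rw [hW1 (f m)] at h
        linarith
      simp only [hδ0]
      rw [keysum m (fun m' =>
        (1 / (M : ℝ)) * ∑ y ∈ Finset.univ.filter (fun y => φ y = m'), W (f m) y),
        ← Finset.mul_sum, hWtot m, hsplit]
      ring
    rw [Finset.sum_congr rfl (fun m _ => h1 m), ← Finset.mul_sum]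
    exact hcode
  -- Type-II error of the test
  have htypeII : (∑ p : Fin M × Fin M,
      ((1 / (M : ℝ)) * ∑ y ∈ Finset.univ.filter (fun y => φ y = p.2), Q y) * (1 - δ0 p))
      = 1 / (M:ℝ) := by
    rw [Fintype.sum_prod_type]
    have h1 : ∀ m : Fin M, (∑ m' : Fin M,
        ((1 / (M : ℝ)) * ∑ y ∈ Finset.univ.filter (fun y => φ y = m'), Q y) * (1 - δ0 (m, m')))
        = (1 / (M:ℝ)) * ∑ y ∈ Finset.univ.filter (fun y => φ y = m), Q y := by
      intro m
      have h2 : ∀ m' : Fin M,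
          ((1 / (M : ℝ)) * ∑ y ∈ Finset.univ.filter (fun y => φ y = m'), Q y) * (1 - δ0 (m, m'))
          = if m = m' then (1 / (M : ℝ)) * ∑ y ∈ Finset.univ.filter (fun y => φ y = m'), Q y
            else 0 := by
        intro m'; by_cases h : m = m' <;> simp [hδ0, h]
      rw [Finset.sum_congr rfl (fun m' _ => h2 m'), Finset.sum_ite_eq]
      simp
    rw [Finset.sum_congr rfl (fun m _ => h1 m), ← Finset.mul_sum, hQtot, mul_one]
  -- membership in the beta set
  set S : Set ℝ := {b : ℝ | ∃ δ : Fin M × Fin M → ℝ, (∀ z, 0 ≤ δ z ∧ δ z ≤ 1) ∧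
    (∑ z, (fun p : Fin M × Fin M =>
        (1 / (M : ℝ)) * ∑ y ∈ Finset.univ.filter (fun y => φ y = p.2), W (f p.1) y) z * δ z) ≤ ε ∧
    b = ∑ z, (fun p : Fin M × Fin M =>
        (1 / (M : ℝ)) * ∑ y ∈ Finset.univ.filter (fun y => φ y = p.2), Q y) z * (1 - δ z)}
    with hS
  have hmem : (1 / (M:ℝ)) ∈ S := by
    refine ⟨δ0, ?_, htypeI, htypeII.symm⟩
    intro z; by_cases h : z.1 = z.2 <;> simp [hδ0, h]
  have hnonneg : ∀ b ∈ S, (0:ℝ) ≤ b := by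
    rintro b ⟨δ, hδ, _, rfl⟩
    apply Finset.sum_nonneg
    intro p _
    have hQp : (0:ℝ) ≤ (1 / (M : ℝ)) * ∑ y ∈ Finset.univ.filter (fun y => φ y = p.2), Q y := by
      apply mul_nonneg (by positivity)
      exact Finset.sum_nonneg fun y _ => hQ0 y
    exact mul_nonneg hQp (by linarith [(hδ p).2])
  have hβdef : betaHT
      (fun p : Fin M × Fin M =>
        (1 / (M : ℝ)) * ∑ y ∈ Finset.univ.filter (fun y => φ y = p.2), W (f p.1) y)
      (fun p : Fin M × Fin M =>
        (1 / (M : ℝ)) * ∑ y ∈ Finset.univ.filter (fun y => φ y = p.2), Q y) ε = sInf S := rfl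
  have hβle : sInf S ≤ 1 / (M:ℝ) := csInf_le ⟨0, hnonneg⟩ hmem
  have hβ0 : 0 ≤ sInf S := le_csInf ⟨_, hmem⟩ hnonneg
  -- conclude
  rw [Dh, hβdef]
  split_ifs with h
  · exact le_top
  · have hβpos : 0 < sInf S := lt_of_le_of_ne hβ0 (Ne.symm h)
    rw [EReal.coe_le_coe_iff]
    have hεne : (1 - ε) ≠ 0 := by linarith
    rw [Real.log_div (ne_of_gt hβpos) hεne]
    have hlog : Real.log (sInf S) ≤ Real.log (1 / (M:ℝ)) :=
      Real.log_le_log hβpos hβle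
    rw [one_div, Real.log_inv] at hlog
    linarith
end

section
/- In Costa's dirty-paper setting, the difference of mutual informations f(α) = (1/2)·log( snr·(snr + inr + 1) / ( snr·inr·(1-α)² + snr + α²·inr ) ) is maximized over α ∈ ℝ at α* = snr/(snr+1), and f(α*) = (1/2)·log(1 + snr), independent of inr. -/
/-- Costa's dirty-paper optimization: the function
`f(α) = (1/2)·log( snr(snr+inr+1) / (snr·inr·(1-α)² + snr + α²·inr) )`
is maximized over `α ∈ ℝ` at `α* = snr/(snr+1)`, and `f(α*) = (1/2)·log(1+snr)`,
independently of `inr`. -/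
theorem stmt17 (snr inr : ℝ) (hs : 0 < snr) (hi : 0 < inr) :
    let f : ℝ → ℝ := fun α =>
      (1 / 2) * Real.log (snr * (snr + inr + 1) /
        (snr * inr * (1 - α) ^ 2 + snr + α ^ 2 * inr))
    (∀ α : ℝ, f α ≤ f (snr / (snr + 1)))
    ∧ f (snr / (snr + 1)) = (1 / 2) * Real.log (1 + snr) := by
  intro f
  have hs1 : (0:ℝ) < snr + 1 := by linarith
  have hs1' : snr + 1 ≠ 0 := ne_of_gt hs1
  -- value of the denominator at α*
  have hgstar : snr * inr * (1 - snr / (snr + 1)) ^ 2 + snr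
      + (snr / (snr + 1)) ^ 2 * inr = snr * (snr + inr + 1) / (snr + 1) := by
    field_simp
    ring
  have hgstar_pos : (0:ℝ) < snr * (snr + inr + 1) / (snr + 1) :=
    div_pos (by nlinarith) hs1
  have hN : (0:ℝ) < snr * (snr + inr + 1) := by nlinarith
  constructor
  · intro α
    have hg : (0:ℝ) < snr * inr * (1 - α) ^ 2 + snr + α ^ 2 * inr := by
      positivity
    have hle : snr * (snr + inr + 1) / (snr + 1)
        ≤ snr * inr * (1 - α) ^ 2 + snr + α ^ 2 * inr := by
      rw [div_le_iff₀ hs1]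
      nlinarith [sq_nonneg ((snr + 1) * α - snr)]
    have : snr * (snr + inr + 1) / (snr * inr * (1 - α) ^ 2 + snr + α ^ 2 * inr)
        ≤ snr * (snr + inr + 1) / (snr * (snr + inr + 1) / (snr + 1)) :=
      div_le_div_of_nonneg_left hN.le hgstar_pos hle
    simp only [f, hgstar]
    have hlog := Real.log_le_log (div_pos hN hg) this
    linarith
  · simp only [f, hgstar]
    have : snr * (snr + inr + 1) / (snr * (snr + inr + 1) / (snr + 1)) = 1 + snr := by
      field_simp
      ring
    rw [this]
end
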